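/- Let V = k^{2n} with symplectic form, n ≥ 1, and let Γ ⊆ GL(V × V) be the group generated by the G_m-action t·(x,y) = (tx, t⁻¹y) and the involution (x,y) ↦ (y,x). Then (V × V)/Γ is isomorphic to the determinantal variety S₀ of matrices in sp_{2n}(k) of rank at most 2, via the map (x,y) ↦ (x yᵀ + y xᵀ)J'. -/

import Mathlib

set_option linter.unusedSectionVars false

open Matrix MvPolynomial Module

variable {K : Type} [Field K]

section MatrixAux
variable {ι : Type} [Fintype ι] [DecidableEq ι]

lemma myrank_add_le (A B : Matrix ι ι K) : (A + B).rank ≤ A.rank + B.rank := by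
  have h : LinearMap.range (A + B).mulVecLin ≤
      LinearMap.range A.mulVecLin ⊔ LinearMap.range B.mulVecLin := by
    rintro _ ⟨v, rfl⟩
    rw [mulVecLin_add]
    exact Submodule.add_mem_sup ⟨v, rfl⟩ ⟨v, rfl⟩
  exact (Submodule.finrank_mono h).trans
    (Submodule.finrank_add_le_finrank_add_finrank _ _)

lemma rank_vecMulVec_le (x y : ι → K) : (vecMulVec x y).rank ≤ 1 := by
  rw [vecMulVec_eq Unit]
  exact (Matrix.rank_mul_le_left _ _).trans ((Matrix.rank_le_card_width _).trans (by simp))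

lemma vecMulVec_transpose (x y : ι → K) : (vecMulVec x y)ᵀ = vecMulVec y x := by
  ext i j; simp [vecMulVec_apply, mul_comm]

lemma vecMulVec_mulVec (w v u : ι → K) : (vecMulVec w v).mulVec u = (v ⬝ᵥ u) • w := by
  ext i
  simp only [mulVec, vecMulVec_apply, dotProduct, Pi.smul_apply, smul_eq_mul, of_apply,
    Finset.sum_mul]
  apply Finset.sum_congr rfl; intros; ring

lemma sym_dot (S : Matrix ι ι K) (hS : Sᵀ = S) (v u : ι → K) :
    S.mulVec v ⬝ᵥ u = v ⬝ᵥ S.mulVec u := by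
  conv_lhs => rw [← hS, mulVec_transpose]
  rw [← dotProduct_mulVec]

lemma single_quad (S : Matrix ι ι K) (i j : ι) :
    Pi.single i (1:K) ⬝ᵥ S.mulVec (Pi.single j 1) = S i j := by
  rw [single_dotProduct, mulVec_single]
  simp

lemma exists_quad_ne_zero (h2 : (2:K) ≠ 0) (S : Matrix ι ι K) (hS : Sᵀ = S) (hne : S ≠ 0) :
    ∃ v, v ⬝ᵥ S.mulVec v ≠ 0 := by
  have : ∃ i j, S i j ≠ 0 := by
    by_contra h
    push_neg at h
    exact hne (by ext i j; exact h i j)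
  obtain ⟨i, j, hij⟩ := this
  by_cases hii : S i i ≠ 0
  · exact ⟨Pi.single i 1, by rwa [single_quad]⟩
  by_cases hjj : S j j ≠ 0
  · exact ⟨Pi.single j 1, by rwa [single_quad]⟩
  push_neg at hii hjj
  refine ⟨Pi.single i 1 + Pi.single j 1, ?_⟩
  have hsym : S j i = S i j := by
    have := congrFun (congrFun hS i) j
    simpa [transpose_apply] using this
  simp only [mulVec_add, dotProduct_add, add_dotProduct]
  rw [single_quad, single_quad, single_quad, single_quad, hii, hjj, hsym]
  intro h
  apply hij
  have : (2:K) * S i j = 0 := by linear_combination h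
  exact (mul_eq_zero.mp this).resolve_left h2

lemma rank_lt_step (S : Matrix ι ι K) (hS : Sᵀ = S) (v : ι → K)
    (hv : v ⬝ᵥ S.mulVec v ≠ 0) (α : K) (hα : α * α = v ⬝ᵥ S.mulVec v) :
    ((S - vecMulVec (α⁻¹ • S.mulVec v) (α⁻¹ • S.mulVec v))ᵀ
      = S - vecMulVec (α⁻¹ • S.mulVec v) (α⁻¹ • S.mulVec v)) ∧
    (S - vecMulVec (α⁻¹ • S.mulVec v) (α⁻¹ • S.mulVec v)).rank < S.rank := by
  have hα0 : α ≠ 0 := by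
    intro h; rw [h] at hα; simp at hα; exact hv hα.symm
  set w := α⁻¹ • S.mulVec v with hw
  set S' := S - vecMulVec w w with hS'
  have hsymm : S'ᵀ = S' := by
    rw [hS', transpose_sub, hS, vecMulVec_transpose]
  refine ⟨hsymm, ?_⟩
  -- key mulVec computations
  have hwv : w ⬝ᵥ v = α := by
    rw [hw, smul_dotProduct, dotProduct_comm, smul_eq_mul, ← hα]
    field_simp
  have hS'v : S'.mulVec v = 0 := by
    rw [hS', sub_mulVec, _root_.vecMulVec_mulVec, hwv, hw, smul_smul]
    field_simp
    rw [one_smul, sub_self]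
  have hker : ∀ u, S.mulVec u = 0 → S'.mulVec u = 0 := by
    intro u hu
    rw [hS', sub_mulVec, _root_.vecMulVec_mulVec, hw, smul_dotProduct, smul_eq_mul,
      sym_dot S hS v u, hu]
    simp [hu]
  have hSv : S.mulVec v ≠ 0 := by
    intro h; apply hv; rw [h]; simp
  -- kernels
  have hkerlt : LinearMap.ker S.mulVecLin < LinearMap.ker S'.mulVecLin := by
    rw [SetLike.lt_iff_le_and_exists]
    constructor
    · intro u hu
      exact hker u hu
    · exact ⟨v, hS'v, hSv⟩
  have h1 := LinearMap.finrank_range_add_finrank_ker S.mulVecLin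
  have h2 := LinearMap.finrank_range_add_finrank_ker S'.mulVecLin
  have h3 : finrank K (LinearMap.ker S.mulVecLin) < finrank K (LinearMap.ker S'.mulVecLin) :=
    Submodule.finrank_lt_finrank_of_lt hkerlt
  have : S'.rank + finrank K (LinearMap.ker S'.mulVecLin)
      = S.rank + finrank K (LinearMap.ker S.mulVecLin) := by
    rw [Matrix.rank, Matrix.rank, h1, h2]
  omega

lemma rank_zero_eq_zero (S : Matrix ι ι K) (h : S.rank = 0) : S = 0 := by
  have hr : LinearMap.range S.mulVecLin = ⊥ := Submodule.finrank_eq_zero.mp h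
  ext i j
  have : S.mulVec (Pi.single j 1) = 0 := by
    have : S.mulVecLin (Pi.single j 1) ∈ LinearMap.range S.mulVecLin := ⟨_, rfl⟩
    rw [hr] at this
    simpa using this
  have := congrFun this i
  simpa [mulVec_single] using this

lemma sym_decomp_list [IsAlgClosed K] (h2 : (2:K) ≠ 0) :
    ∀ (r : ℕ) (S : Matrix ι ι K), Sᵀ = S → S.rank ≤ r →
    ∃ L : List (ι → K), L.length ≤ r ∧ S = (L.map (fun w => vecMulVec w w)).sum := by
  intro r
  induction r with
  | zero =>
    intro S hS hr
    exact ⟨[], by simp, by simpa using rank_zero_eq_zero S (Nat.le_zero.mp hr)⟩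
  | succ r ih =>
    intro S hS hr
    by_cases hne : S = 0
    · exact ⟨[], by simp, by simp [hne]⟩
    · obtain ⟨v, hv⟩ := exists_quad_ne_zero h2 S hS hne
      obtain ⟨α, hα⟩ := IsAlgClosed.exists_pow_nat_eq (k := K) (v ⬝ᵥ S.mulVec v)
        (n := 2) (by norm_num)
      rw [pow_two] at hα
      obtain ⟨hsym, hlt⟩ := rank_lt_step S hS v hv α hα
      set w := α⁻¹ • S.mulVec v with hwdef
      obtain ⟨L, hL, hsum⟩ := ih (S - vecMulVec w w) hsym (by omega)
      refine ⟨w :: L, by simpa using hL, ?_⟩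
      simp only [List.map_cons, List.sum_cons, ← hsum]
      abel

end MatrixAux

section MatrixAux2
variable {ι : Type} [Fintype ι] [DecidableEq ι]

lemma sym_decomp_two [IsAlgClosed K] (h2 : (2:K) ≠ 0) (S : Matrix ι ι K)
    (hS : Sᵀ = S) (hr : S.rank ≤ 2) :
    ∃ x y : ι → K, vecMulVec x y + vecMulVec y x = S := by
  obtain ⟨L, hL, hsum⟩ := sym_decomp_list h2 2 S hS hr
  have hzero : vecMulVec (0 : ι → K) (0 : ι → K) = (0 : Matrix ι ι K) := by
    ext a b; simp [vecMulVec_apply]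
  obtain ⟨w₁, w₂, hw⟩ : ∃ w₁ w₂, S = vecMulVec w₁ w₁ + vecMulVec w₂ w₂ := by
    match L, hL, hsum with
    | [], _, hsum => exact ⟨0, 0, by simp [hsum, hzero]⟩
    | [a], _, hsum => exact ⟨a, 0, by rw [hsum]; simp only [List.map_cons,
        List.map_nil, List.sum_cons, List.sum_nil, add_zero, hzero]⟩
    | [a,b], _, hsum => exact ⟨a, b, by rw [hsum]; simp only [List.map_cons,
        List.map_nil, List.sum_cons, List.sum_nil, add_zero]⟩
  obtain ⟨i, hi⟩ := IsAlgClosed.exists_pow_nat_eq (k := K) (-1) (n := 2) (by norm_num)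
  rw [pow_two] at hi
  set h : K := (2:K)⁻¹ with hhdef
  have hh : 2 * h = 1 := by rw [hhdef]; exact mul_inv_cancel₀ h2
  refine ⟨w₁ + i • w₂, h • w₁ - (h * i) • w₂, ?_⟩
  ext a b
  simp only [hw, Matrix.add_apply, vecMulVec_apply, Pi.add_apply, Pi.sub_apply,
    Pi.smul_apply, smul_eq_mul]
  linear_combination (w₁ a * w₁ b + w₂ a * w₂ b) * hh + (-(2*h*(w₂ a * w₂ b))) * hi

lemma rank_neg (M : Matrix ι ι K) : (-M).rank = M.rank := by
  have : (-M).mulVecLin = -M.mulVecLin := by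
    ext v
    simp [mulVecLin, neg_mulVec]
  unfold Matrix.rank
  rw [this, LinearMap.range_neg]

lemma surj_aux [IsAlgClosed K] (h2 : (2:K) ≠ 0) (J' : Matrix ι ι K)
    (hJT : J'ᵀ = -J') (hJ2 : J' * J' = -1)
    (A : Matrix ι ι K) (hA : Aᵀ * J' + J' * A = 0) (hr : A.rank ≤ 2) :
    ∃ x y, (vecMulVec x y + vecMulVec y x) * J' = A := by
  have h1 : Aᵀ * J' = -(J' * A) := eq_neg_of_add_eq_zero_left hA
  have hAt : Aᵀ = J' * A * J' := by
    have h3 : Aᵀ * J' * J' = -(J' * A) * J' := by rw [h1]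
    rw [mul_assoc, hJ2, mul_neg_one, neg_mul] at h3
    exact neg_injective h3
  set S := -(A * J') with hSdef
  have hSsym : Sᵀ = S := by
    rw [hSdef, transpose_neg, transpose_mul, hJT, hAt]
    calc -(-J' * (J' * A * J')) = (J' * J') * (A * J') := by
          rw [neg_mul, neg_neg]; noncomm_ring
      _ = -(A * J') := by rw [hJ2]; simp
  have hSr : S.rank ≤ 2 := by
    have : S = (-A) * J' := by rw [hSdef, neg_mul]
    rw [this]
    exact (Matrix.rank_mul_le_left _ _).trans (by rw [rank_neg]; exact hr)
  obtain ⟨x, y, hxy⟩ := sym_decomp_two h2 S hSsym hSr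
  refine ⟨x, y, ?_⟩
  rw [hxy, hSdef, neg_mul, mul_assoc, hJ2, mul_neg_one, neg_neg]

end MatrixAux2

section Concrete
variable {n : ℕ}

def frev (n : ℕ) (a : Fin n) : Fin n := ⟨n - 1 - (a:ℕ), by have := a.2; omega⟩

lemma frev_val (a : Fin n) : (frev n a : ℕ) = n - 1 - (a:ℕ) := rfl

lemma hrev_iff (a b : Fin n) : ((a:ℕ) + (b:ℕ) + 1 = n) ↔ b = frev n a := by
  rw [Fin.ext_iff, frev_val]
  have ha := a.2; have hb := b.2
  constructor <;> (intro h; omega)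

lemma J_mul_J (hn : 0 < n) :
    (Matrix.of fun i j : Fin n => if (i:ℕ)+(j:ℕ)+1 = n then (1:K) else 0) *
    (Matrix.of fun i j : Fin n => if (i:ℕ)+(j:ℕ)+1 = n then (1:K) else 0) = 1 := by
  ext i j
  rw [Matrix.mul_apply]
  simp only [Matrix.of_apply]
  rw [Finset.sum_congr rfl
    (fun l _ => by rw [if_congr (hrev_iff i l) rfl rfl, ite_mul, one_mul, zero_mul])]
  rw [Finset.sum_ite_eq' Finset.univ]
  simp only [Finset.mem_univ, if_true]
  rw [Matrix.one_apply, frev_val]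
  have hi := i.2; have hj := j.2
  by_cases h : i = j
  · rw [if_pos (by omega : n - 1 - (i:ℕ) + (j:ℕ) + 1 = n), if_pos h]
  · rw [if_neg, if_neg h]
    rw [Fin.ext_iff] at h
    omega

lemma J_symm :
    (Matrix.of fun i j : Fin n => if (i:ℕ)+(j:ℕ)+1 = n then (1:K) else 0)ᵀ =
    (Matrix.of fun i j : Fin n => if (i:ℕ)+(j:ℕ)+1 = n then (1:K) else 0) := by
  ext i j
  simp only [Matrix.transpose_apply, Matrix.of_apply]
  rw [if_congr (show ((j:ℕ)+(i:ℕ)+1 = n) ↔ ((i:ℕ)+(j:ℕ)+1 = n) by omega) rfl rfl]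

end Concrete



section Invariant
variable {K : Type} [Field K] {ι' : Type} [Fintype ι']
variable (μ : (ι' → K) → (ι' → K) → (ι' × ι') → K)

def Good (g : (ι' → K) → (ι' → K) → K) : Prop :=
  ∃ p : MvPolynomial (ι' × ι') K, ∀ x y, g x y = eval (μ x y) p

lemma good_ext {g h : (ι' → K) → (ι' → K) → K} (he : ∀ x y, g x y = h x y)
    (hg : Good μ h) : Good μ g := by
  obtain ⟨p, hp⟩ := hg
  exact ⟨p, fun x y => (he x y).trans (hp x y)⟩

lemma good_const (c : K) : Good μ (fun _ _ => c) :=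
  ⟨C c, fun x y => by simp⟩

lemma good_add {g h : (ι' → K) → (ι' → K) → K} (hg : Good μ g) (hh : Good μ h) :
    Good μ (fun x y => g x y + h x y) := by
  obtain ⟨p, hp⟩ := hg; obtain ⟨q, hq⟩ := hh
  exact ⟨p + q, fun x y => by simp [hp x y, hq x y]⟩

lemma good_mul {g h : (ι' → K) → (ι' → K) → K} (hg : Good μ g) (hh : Good μ h) :
    Good μ (fun x y => g x y * h x y) := by
  obtain ⟨p, hp⟩ := hg; obtain ⟨q, hq⟩ := hh
  exact ⟨p * q, fun x y => by simp [hp x y, hq x y]⟩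

lemma good_smul (c : K) {g : (ι' → K) → (ι' → K) → K} (hg : Good μ g) :
    Good μ (fun x y => c * g x y) :=
  good_ext μ (fun x y => rfl) (good_mul μ (good_const μ c) hg)

lemma good_sub {g h : (ι' → K) → (ι' → K) → K} (hg : Good μ g) (hh : Good μ h) :
    Good μ (fun x y => g x y - h x y) := by
  obtain ⟨p, hp⟩ := hg; obtain ⟨q, hq⟩ := hh
  exact ⟨p - q, fun x y => by simp [hp x y, hq x y]⟩

lemma good_sum {A : Type} (s : Finset A) (g : A → (ι' → K) → (ι' → K) → K)
    (h : ∀ a ∈ s, Good μ (g a)) : Good μ (fun x y => ∑ a ∈ s, g a x y) := by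
  classical
  induction s using Finset.induction_on with
  | empty => exact good_ext μ (fun x y => by simp) (good_const μ 0)
  | insert a s hni ih =>
    refine good_ext μ (fun x y => Finset.sum_insert hni) ?_
    exact good_add μ (h a (Finset.mem_insert_self a s))
      (ih (fun b hb => h b (Finset.mem_insert_of_mem hb)))

-- the d·d = s-combination identity
lemma dd_identity (x y : ι' → K) (i j a b : ι') :
    (x i * y j - x j * y i) * (x a * y b - x b * y a) =
    (x i * y b + x b * y i) * (x j * y a + x a * y j)
      - (x i * y a + x a * y i) * (x j * y b + x b * y j) := by
  ring

lemma good_T (hμ : ∀ i j : ι', Good μ (fun x y => x i * y j + x j * y i))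
    (h2 : (2:K) ≠ 0) :
    ∀ L : List (ι' × ι'),
      Good μ (fun x y => (L.map fun p => x p.1 * y p.2).prod
          + (L.map fun p => x p.2 * y p.1).prod)
      ∧ ∀ a b : ι', Good μ (fun x y => (x a * y b - x b * y a) *
          ((L.map fun p => x p.1 * y p.2).prod - (L.map fun p => x p.2 * y p.1).prod)) := by
  intro L
  induction L with
  | nil =>
    constructor
    · exact good_ext μ (fun x y => by norm_num) (good_const μ 2)
    · intro a b
      exact good_ext μ (fun x y => by simp) (good_const μ 0)
  | cons hd tl ih =>
    obtain ⟨ihT, ihG⟩ := ih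
    have h : (2:K)⁻¹ * 2 = 1 := inv_mul_cancel₀ h2
    constructor
    · refine good_ext μ (fun x y => ?_)
        (good_smul μ (2:K)⁻¹ (good_add μ
          (good_mul μ (hμ hd.1 hd.2) ihT)
          (ihG hd.1 hd.2)))
      simp only [List.map_cons, List.prod_cons]
      set P := ((tl.map fun p => x p.1 * y p.2).prod)
      set Q := ((tl.map fun p => x p.2 * y p.1).prod)
      linear_combination (-(x hd.1 * y hd.2 * P + x hd.2 * y hd.1 * Q)) * h
    · intro a b
      refine good_ext μ (fun x y => ?_)
        (good_smul μ (2:K)⁻¹ (good_add μ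
          (good_mul μ (hμ hd.1 hd.2) (ihG a b))
          (good_mul μ (good_ext μ (fun x y => dd_identity x y a b hd.1 hd.2)
            (good_sub μ (good_mul μ (hμ a hd.2) (hμ b hd.1))
              (good_mul μ (hμ a hd.1) (hμ b hd.2)))) ihT)))
      simp only [List.map_cons, List.prod_cons]
      set P := ((tl.map fun p => x p.1 * y p.2).prod)
      set Q := ((tl.map fun p => x p.2 * y p.1).prod)
      set D := x a * y b - x b * y a
      linear_combination (-(D * (x hd.1 * y hd.2 * P - x hd.2 * y hd.1 * Q))) * h

end Invariant

section Invariant2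
variable {K : Type} [Field K] {ι' : Type} [Fintype ι']
variable (μ : (ι' → K) → (ι' → K) → (ι' × ι') → K)

lemma zip_prod (f g : ι' → K) :
    ∀ (L1 L2 : List ι'), L1.length = L2.length →
    ((L1.zip L2).map (fun p => f p.1 * g p.2)).prod = (L1.map f).prod * (L2.map g).prod := by
  intro L1
  induction L1 with
  | nil =>
    intro L2 h
    cases L2 with
    | nil => simp
    | cons b t2 => simp at h
  | cons a t ih =>
    intro L2 h
    cases L2 with
    | nil => simp at h
    | cons b t2 =>
      simp only [List.zip_cons_cons, List.map_cons, List.prod_cons]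
      rw [ih t2 (by simpa using h)]
      ring

lemma multiset_prod_expand (aL : ι' → ℕ) (f : ι' → K) :
    (((Finset.univ.val.bind (fun i => Multiset.replicate (aL i) i)).map f)).prod
      = ∏ i, f i ^ aL i := by
  rw [Multiset.map_bind, Multiset.prod_bind]
  simp only [Multiset.map_replicate, Multiset.prod_replicate]
  rfl

lemma toList_map_prod (M : Multiset ι') (f : ι' → K) :
    ((M.toList.map f)).prod = (M.map f).prod := by
  conv_rhs => rw [← Multiset.coe_toList M]
  rw [Multiset.map_coe, Multiset.prod_coe]

lemma good_powT (hμ : ∀ i j : ι', Good μ (fun x y => x i * y j + x j * y i))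
    (h2 : (2:K) ≠ 0) (aL aR : ι' → ℕ) (hbal : ∑ i, aL i = ∑ i, aR i) :
    Good μ (fun x y => (∏ i, x i ^ aL i) * (∏ i, y i ^ aR i)
      + (∏ i, x i ^ aR i) * (∏ i, y i ^ aL i)) := by
  classical
  set MA : Multiset ι' := Finset.univ.val.bind (fun i => Multiset.replicate (aL i) i) with hMA
  set MB : Multiset ι' := Finset.univ.val.bind (fun i => Multiset.replicate (aR i) i) with hMB
  set LA := MA.toList
  set LB := MB.toList
  have hlen : LA.length = LB.length := by
    have hc : MA.card = MB.card := by
      rw [hMA, hMB, Multiset.card_bind, Multiset.card_bind]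
      have e1 : (Multiset.map (Multiset.card ∘ fun i => Multiset.replicate (aL i) i)
          Finset.univ.val) = Multiset.map aL Finset.univ.val :=
        Multiset.map_congr rfl (fun x _ => by simp)
      have e2 : (Multiset.map (Multiset.card ∘ fun i => Multiset.replicate (aR i) i)
          Finset.univ.val) = Multiset.map aR Finset.univ.val :=
        Multiset.map_congr rfl (fun x _ => by simp)
      rw [e1, e2]
      exact hbal
    simp only [LA, LB, Multiset.length_toList]
    exact hc
  have hA : ∀ f : ι' → K, ((LA.map f)).prod = ∏ i, f i ^ aL i := by
    intro f; rw [toList_map_prod]; exact multiset_prod_expand aL f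
  have hB : ∀ f : ι' → K, ((LB.map f)).prod = ∏ i, f i ^ aR i := by
    intro f; rw [toList_map_prod]; exact multiset_prod_expand aR f
  refine good_ext μ (fun x y => ?_) ((good_T μ hμ h2 (LA.zip LB)).1)
  have key1 : (((LA.zip LB).map fun p => x p.1 * y p.2)).prod
      = (∏ i, x i ^ aL i) * (∏ i, y i ^ aR i) := by
    rw [zip_prod x y LA LB hlen, hA, hB]
  have key2 : (((LA.zip LB).map fun p => x p.2 * y p.1)).prod
      = (∏ i, x i ^ aR i) * (∏ i, y i ^ aL i) := by
    have : ((LA.zip LB).map fun p => x p.2 * y p.1)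
        = ((LA.zip LB).map fun p => y p.1 * x p.2) := by
      apply List.map_congr_left
      intro p _
      ring
    rw [this, zip_prod y x LA LB hlen, hA, hB]
    ring
  rw [key1, key2]

end Invariant2

section Balanced
variable {K : Type} [Field K] [IsAlgClosed K] {ι' : Type} [Fintype ι']

def wL (a : (ι' ⊕ ι') →₀ ℕ) : ℕ := ∑ i : ι', a (Sum.inl i)
def wR (a : (ι' ⊕ ι') →₀ ℕ) : ℕ := ∑ i : ι', a (Sum.inr i)

lemma eq_of_eval_xy (f g : MvPolynomial (ι' ⊕ ι') K)
    (h : ∀ x y : ι' → K, eval (Sum.elim x y) f = eval (Sum.elim x y) g) : f = g := by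
  apply MvPolynomial.funext
  intro z
  rw [show z = Sum.elim (z ∘ Sum.inl) (z ∘ Sum.inr) from funext fun v => by cases v <;> rfl]
  exact h _ _

noncomputable def psiL : MvPolynomial (ι' ⊕ ι') K →ₐ[K] Polynomial (MvPolynomial (ι' ⊕ ι') K) :=
  aeval (Sum.elim (fun i => Polynomial.C (X (Sum.inl i)) * Polynomial.X)
    (fun j => Polynomial.C (X (Sum.inr j))))

noncomputable def psiR : MvPolynomial (ι' ⊕ ι') K →ₐ[K] Polynomial (MvPolynomial (ι' ⊕ ι') K) :=
  aeval (Sum.elim (fun i => Polynomial.C (X (Sum.inl i)))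
    (fun j => Polynomial.C (X (Sum.inr j)) * Polynomial.X))

lemma eval_psiL (q : MvPolynomial (ι' ⊕ ι') K) (t : K) (x y : ι' → K) :
    Polynomial.eval₂ (MvPolynomial.eval (Sum.elim x y) : MvPolynomial (ι' ⊕ ι') K →+* K) t
      ((psiL q : Polynomial (MvPolynomial (ι' ⊕ ι') K)))
      = eval (Sum.elim (t • x) y) q := by
  have : (Polynomial.eval₂RingHom
      (MvPolynomial.eval (Sum.elim x y) : MvPolynomial (ι' ⊕ ι') K →+* K) t).comp
        (psiL (K := K) (ι' := ι')).toRingHom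
      = (MvPolynomial.eval (Sum.elim (t • x) y) : MvPolynomial (ι' ⊕ ι') K →+* K) := by
    apply MvPolynomial.ringHom_ext
    · intro r
      have h1 : psiL (K := K) (ι' := ι') (C r) = Polynomial.C (MvPolynomial.C r) := by
        unfold psiL; rw [aeval_C]; rfl
      simp only [RingHom.coe_comp, Function.comp_apply, AlgHom.toRingHom_eq_coe,
        RingHom.coe_coe, h1, Polynomial.coe_eval₂RingHom]
      rw [Polynomial.eval₂_C]
      simp
    · intro v
      simp only [RingHom.coe_comp, Function.comp_apply, AlgHom.toRingHom_eq_coe,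
        RingHom.coe_coe, Polynomial.coe_eval₂RingHom]
      cases v with
      | inl i =>
        rw [show psiL (K := K) (ι' := ι') (X (Sum.inl i))
            = Polynomial.C (X (Sum.inl i)) * Polynomial.X from by
          unfold psiL; rw [aeval_X, Sum.elim_inl]]
        rw [Polynomial.eval₂_mul, Polynomial.eval₂_C, Polynomial.eval₂_X,
          eval_X, eval_X, Sum.elim_inl, Sum.elim_inl]
        simp [mul_comm]
      | inr j =>
        rw [show psiL (K := K) (ι' := ι') (X (Sum.inr j))
            = Polynomial.C (X (Sum.inr j)) from by
          unfold psiL; rw [aeval_X, Sum.elim_inr]]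
        rw [Polynomial.eval₂_C, eval_X, eval_X, Sum.elim_inr, Sum.elim_inr]
  exact DFunLike.congr_fun this q

lemma eval_psiR (q : MvPolynomial (ι' ⊕ ι') K) (t : K) (x y : ι' → K) :
    Polynomial.eval₂ (MvPolynomial.eval (Sum.elim x y) : MvPolynomial (ι' ⊕ ι') K →+* K) t
      ((psiR q : Polynomial (MvPolynomial (ι' ⊕ ι') K)))
      = eval (Sum.elim x (t • y)) q := by
  have : (Polynomial.eval₂RingHom
      (MvPolynomial.eval (Sum.elim x y) : MvPolynomial (ι' ⊕ ι') K →+* K) t).comp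
        (psiR (K := K) (ι' := ι')).toRingHom
      = (MvPolynomial.eval (Sum.elim x (t • y)) : MvPolynomial (ι' ⊕ ι') K →+* K) := by
    apply MvPolynomial.ringHom_ext
    · intro r
      have h1 : psiR (K := K) (ι' := ι') (C r) = Polynomial.C (MvPolynomial.C r) := by
        unfold psiR; rw [aeval_C]; rfl
      simp only [RingHom.coe_comp, Function.comp_apply, AlgHom.toRingHom_eq_coe,
        RingHom.coe_coe, h1, Polynomial.coe_eval₂RingHom]
      rw [Polynomial.eval₂_C]
      simp
    · intro v
      simp only [RingHom.coe_comp, Function.comp_apply, AlgHom.toRingHom_eq_coe,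
        RingHom.coe_coe, Polynomial.coe_eval₂RingHom]
      cases v with
      | inl i =>
        rw [show psiR (K := K) (ι' := ι') (X (Sum.inl i))
            = Polynomial.C (X (Sum.inl i)) from by
          unfold psiR; rw [aeval_X, Sum.elim_inl]]
        rw [Polynomial.eval₂_C, eval_X, eval_X, Sum.elim_inl, Sum.elim_inl]
      | inr j =>
        rw [show psiR (K := K) (ι' := ι') (X (Sum.inr j))
            = Polynomial.C (X (Sum.inr j)) * Polynomial.X from by
          unfold psiR; rw [aeval_X, Sum.elim_inr]]
        rw [Polynomial.eval₂_mul, Polynomial.eval₂_C, Polynomial.eval₂_X,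
          eval_X, eval_X, Sum.elim_inr, Sum.elim_inr]
        simp [mul_comm]
  exact DFunLike.congr_fun this q

lemma psiL_monomial (b : (ι' ⊕ ι') →₀ ℕ) (c : K) :
    psiL (monomial b c) = Polynomial.C (monomial b c) * Polynomial.X ^ (wL b) := by
  rw [show psiL (monomial b c) = aeval (Sum.elim (fun i => Polynomial.C (X (Sum.inl i)) *
      Polynomial.X) (fun j => Polynomial.C (X (Sum.inr j)))) (monomial b c) from rfl]
  rw [aeval_monomial, Finsupp.prod_fintype _ _ (fun v => pow_zero _), Fintype.prod_sum_type]
  rw [monomial_eq, Finsupp.prod_fintype _ _ (fun v => pow_zero _), Fintype.prod_sum_type]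
  simp only [Sum.elim_inl, Sum.elim_inr, mul_pow, Finset.prod_mul_distrib,
    _root_.map_mul, map_prod, _root_.map_pow, Finset.prod_pow_eq_pow_sum]
  rw [show (algebraMap K (Polynomial (MvPolynomial (ι' ⊕ ι') K))) c
    = Polynomial.C (MvPolynomial.C c) from rfl]
  rw [wL]
  ring

lemma psiR_monomial (b : (ι' ⊕ ι') →₀ ℕ) (c : K) :
    psiR (monomial b c) = Polynomial.C (monomial b c) * Polynomial.X ^ (wR b) := by
  rw [show psiR (monomial b c) = aeval (Sum.elim (fun i => Polynomial.C (X (Sum.inl i)))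
      (fun j => Polynomial.C (X (Sum.inr j)) * Polynomial.X)) (monomial b c) from rfl]
  rw [aeval_monomial, Finsupp.prod_fintype _ _ (fun v => pow_zero _), Fintype.prod_sum_type]
  rw [monomial_eq, Finsupp.prod_fintype _ _ (fun v => pow_zero _), Fintype.prod_sum_type]
  simp only [Sum.elim_inl, Sum.elim_inr, mul_pow, Finset.prod_mul_distrib,
    _root_.map_mul, map_prod, _root_.map_pow, Finset.prod_pow_eq_pow_sum]
  rw [show (algebraMap K (Polynomial (MvPolynomial (ι' ⊕ ι') K))) c
    = Polynomial.C (MvPolynomial.C c) from rfl]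
  rw [wR]
  ring

lemma coeff_psi_aux (q : MvPolynomial (ι' ⊕ ι') K) (e : ℕ) (a : (ι' ⊕ ι') →₀ ℕ)
    (w : ((ι' ⊕ ι') →₀ ℕ) → ℕ)
    (psi : MvPolynomial (ι' ⊕ ι') K →ₐ[K] Polynomial (MvPolynomial (ι' ⊕ ι') K))
    (hpsi : ∀ b c, psi (monomial b c) = Polynomial.C (monomial b c) * Polynomial.X ^ (w b)) :
    MvPolynomial.coeff a ((psi q).coeff e) = if w a = e then coeff a q else 0 := by
  classical
  conv_lhs => rw [← support_sum_monomial_coeff q]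
  rw [map_sum, Polynomial.finset_sum_coeff]
  have step : ∀ b ∈ q.support,
      ((psi (monomial b (coeff b q))).coeff e)
        = if w b = e then monomial b (coeff b q) else 0 := by
    intro b _
    rw [hpsi b, Polynomial.coeff_C_mul, Polynomial.coeff_X_pow]
    by_cases h : w b = e
    · rw [if_pos h, if_pos (h.symm), mul_one]
    · rw [if_neg h, if_neg (fun hh => h hh.symm), mul_zero]
  rw [Finset.sum_congr rfl step, MvPolynomial.coeff_sum]
  have step2 : ∀ b ∈ q.support,
      MvPolynomial.coeff a (if w b = e then monomial b (coeff b q) else 0)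
        = if b = a ∧ w b = e then coeff b q else 0 := by
    intro b _
    by_cases h : w b = e
    · rw [if_pos h, coeff_monomial]
      by_cases hba : b = a
      · rw [if_pos hba, if_pos ⟨hba, h⟩]
      · rw [if_neg hba, if_neg (fun hh => hba hh.1)]
    · rw [if_neg h, if_neg (fun hh => h hh.2)]
      simp
  rw [Finset.sum_congr rfl step2]
  by_cases ha : a ∈ q.support
  · rw [Finset.sum_eq_single a]
    · by_cases h : w a = e
      · rw [if_pos ⟨rfl, h⟩, if_pos h]
      · rw [if_neg (fun hh => h hh.2), if_neg h]
    · intro b _ hba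
      rw [if_neg (fun hh => hba hh.1)]
    · intro h; exact absurd ha h
  · have hc : coeff a q = 0 := by rwa [← MvPolynomial.notMem_support_iff]
    rw [hc, ite_self]
    exact Finset.sum_eq_zero fun b hb => if_neg (by rintro ⟨rfl, -⟩; exact ha hb)

end Balanced

section Balanced2
variable {K : Type} [Field K] [IsAlgClosed K] {ι' : Type} [Fintype ι']

lemma balanced_of_invariant (q : MvPolynomial (ι' ⊕ ι') K)
    (hinv : ∀ t : K, t ≠ 0 → ∀ x y : ι' → K,
      eval (Sum.elim (t • x) (t⁻¹ • y)) q = eval (Sum.elim x y) q) :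
    ∀ a ∈ q.support, wL a = wR a := by
  have hfun : ∀ (t : K), t ≠ 0 → ∀ x y : ι' → K,
      eval (Sum.elim (t • x) y) q = eval (Sum.elim x (t • y)) q := by
    intro t ht x y
    have := hinv t ht x (t • y)
    rwa [inv_smul_smul₀ ht] at this
  have hPP : psiL q = psiR q := by
    apply Polynomial.ext
    intro e
    apply eq_of_eval_xy
    intro x y
    set ev : MvPolynomial (ι' ⊕ ι') K →+* K := (MvPolynomial.eval (Sum.elim x y) : _)
    set U : Polynomial K := (psiL q - psiR q).map ev with hU
    have hroot : ∀ t : K, t ≠ 0 → U.eval t = 0 := by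
      intro t ht
      rw [hU, Polynomial.eval_map, Polynomial.eval₂_sub, eval_psiL, eval_psiR]
      rw [hfun t ht x y]
      ring
    have hU0 : U = 0 := by
      apply Polynomial.eq_zero_of_infinite_isRoot
      apply Set.Infinite.mono (s := {t : K | t ≠ 0})
      · intro t ht; exact hroot t ht
      · have : ({t : K | t ≠ 0}) = {(0:K)}ᶜ := by ext t; simp [Set.mem_compl_iff]
        rw [this]
        exact Set.Finite.infinite_compl (Set.finite_singleton 0)
    have := congrArg (fun (p : Polynomial K) => p.coeff e) hU0
    simp only [Polynomial.coeff_zero] at this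
    rw [hU, Polynomial.coeff_map, Polynomial.coeff_sub, map_sub] at this
    have h2 := sub_eq_zero.mp this
    exact h2
  intro a ha
  have h1 := coeff_psi_aux q (wL a) a wL psiL (fun b c => psiL_monomial b c)
  have h2 := coeff_psi_aux q (wL a) a wR psiR (fun b c => psiR_monomial b c)
  rw [hPP] at h1
  rw [h1, if_pos rfl] at h2
  have hc : coeff a q ≠ 0 := MvPolynomial.mem_support_iff.mp ha
  by_contra hne
  rw [if_neg (fun hh => hne hh.symm)] at h2
  exact hc h2

lemma eval_elim_expand (q : MvPolynomial (ι' ⊕ ι') K) (x y : ι' → K) :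
    eval (Sum.elim x y) q = ∑ a ∈ q.support,
      coeff a q * ((∏ i, x i ^ a (Sum.inl i)) * (∏ i, y i ^ a (Sum.inr i))) := by
  conv_lhs => rw [← support_sum_monomial_coeff q]
  rw [map_sum]
  apply Finset.sum_congr rfl
  intro a _
  rw [eval_monomial, Finsupp.prod_fintype _ _ (fun v => pow_zero _), Fintype.prod_sum_type]
  simp only [Sum.elim_inl, Sum.elim_inr]

end Balanced2


section EntryLemma
variable {K : Type} [Field K] {n : ℕ}

lemma frev_frev (j : Fin n) : frev n (frev n j) = j := by
  apply Fin.ext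
  rw [frev_val, frev_val]
  have := j.2
  omega

lemma mul_Jp_inr (M : Matrix (Fin n ⊕ Fin n) (Fin n ⊕ Fin n) K)
    (i : Fin n ⊕ Fin n) (j₀ : Fin n) :
    (M * Matrix.fromBlocks 0
      (Matrix.of fun i j : Fin n => if (i:ℕ)+(j:ℕ)+1 = n then (1:K) else 0)
      (-(Matrix.of fun i j : Fin n => if (i:ℕ)+(j:ℕ)+1 = n then (1:K) else 0)) 0)
      i (Sum.inr j₀) = M i (Sum.inl (frev n j₀)) := by
  rw [Matrix.mul_apply, Fintype.sum_sum_type]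
  simp only [Matrix.fromBlocks_apply₁₂, Matrix.fromBlocks_apply₂₂, Matrix.of_apply,
    Matrix.zero_apply, mul_zero, Finset.sum_const_zero, add_zero]
  rw [Finset.sum_congr rfl (fun l _ => by
    rw [if_congr (show ((l:ℕ)+(j₀:ℕ)+1 = n) ↔ l = frev n j₀ from by
      rw [← hrev_iff j₀ l]
      constructor <;> (intro hh; omega)) rfl rfl, mul_ite, mul_one, mul_zero])]
  rw [Finset.sum_ite_eq' Finset.univ]
  simp

lemma mul_Jp_inl (M : Matrix (Fin n ⊕ Fin n) (Fin n ⊕ Fin n) K)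
    (i : Fin n ⊕ Fin n) (j₀ : Fin n) :
    (M * Matrix.fromBlocks 0
      (Matrix.of fun i j : Fin n => if (i:ℕ)+(j:ℕ)+1 = n then (1:K) else 0)
      (-(Matrix.of fun i j : Fin n => if (i:ℕ)+(j:ℕ)+1 = n then (1:K) else 0)) 0)
      i (Sum.inl j₀) = -(M i (Sum.inr (frev n j₀))) := by
  rw [Matrix.mul_apply, Fintype.sum_sum_type]
  simp only [Matrix.fromBlocks_apply₁₁, Matrix.fromBlocks_apply₂₁, Matrix.neg_apply,
    Matrix.of_apply, Matrix.zero_apply, mul_zero, Finset.sum_const_zero, zero_add]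
  rw [Finset.sum_congr rfl (fun l _ => by
    rw [if_congr (show ((l:ℕ)+(j₀:ℕ)+1 = n) ↔ l = frev n j₀ from by
      rw [← hrev_iff j₀ l]
      constructor <;> (intro hh; omega)) rfl rfl, mul_neg, mul_ite, mul_one, mul_zero])]
  rw [Finset.sum_neg_distrib, Finset.sum_ite_eq' Finset.univ]
  simp

end EntryLemma


/-- Let `Γ` be the group generated by `t·(x,y) = (tx, t⁻¹y)` and the swap `(x,y) ↦ (y,x)` on
`V × V`, `V = k^{2n}` symplectic. Then `(V × V)/Γ ≅ S₀`, the determinantal variety of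
rank ≤ 2 matrices in `sp_{2n}`, via `(x,y) ↦ (xyᵀ + yxᵀ)J'`. -/
theorem stmt_5 (k : Type) [Field k] [IsAlgClosed k] (h2 : (2 : k) ≠ 0)
    (n : ℕ) (hn : 0 < n) :
    let J : Matrix (Fin n) (Fin n) k :=
      Matrix.of fun i j => if (i : ℕ) + (j : ℕ) + 1 = n then 1 else 0
    let J' : Matrix (Fin n ⊕ Fin n) (Fin n ⊕ Fin n) k := Matrix.fromBlocks 0 J (-J) 0
    let m : ((Fin n ⊕ Fin n) → k) → ((Fin n ⊕ Fin n) → k) →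
        Matrix (Fin n ⊕ Fin n) (Fin n ⊕ Fin n) k :=
      fun x y => (Matrix.vecMulVec x y + Matrix.vecMulVec y x) * J'
    let S₀ : Set (Matrix (Fin n ⊕ Fin n) (Fin n ⊕ Fin n) k) :=
      {A | Aᵀ * J' + J' * A = 0 ∧ A.rank ≤ 2}
    (∀ t : k, t ≠ 0 → ∀ x y : (Fin n ⊕ Fin n) → k, m (t • x) (t⁻¹ • y) = m x y) ∧
    (∀ x y : (Fin n ⊕ Fin n) → k, m y x = m x y) ∧
    (∀ x y : (Fin n ⊕ Fin n) → k, m x y ∈ S₀) ∧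
    (∀ A ∈ S₀, ∃ x y : (Fin n ⊕ Fin n) → k, m x y = A) ∧
    (∀ p q : MvPolynomial ((Fin n ⊕ Fin n) × (Fin n ⊕ Fin n)) k,
      (∀ x y : (Fin n ⊕ Fin n) → k,
        MvPolynomial.eval (fun v => m x y v.1 v.2) p
          = MvPolynomial.eval (fun v => m x y v.1 v.2) q) →
      ∀ A ∈ S₀, MvPolynomial.eval (fun v => A v.1 v.2) p
          = MvPolynomial.eval (fun v => A v.1 v.2) q) ∧
    (∀ q₀ : MvPolynomial ((Fin n ⊕ Fin n) ⊕ (Fin n ⊕ Fin n)) k,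
      (∀ t : k, t ≠ 0 → ∀ x y : (Fin n ⊕ Fin n) → k,
        MvPolynomial.eval (Sum.elim (t • x) (t⁻¹ • y)) q₀
          = MvPolynomial.eval (Sum.elim x y) q₀) →
      (∀ x y : (Fin n ⊕ Fin n) → k,
        MvPolynomial.eval (Sum.elim y x) q₀ = MvPolynomial.eval (Sum.elim x y) q₀) →
      ∃ p : MvPolynomial ((Fin n ⊕ Fin n) × (Fin n ⊕ Fin n)) k,
        ∀ x y : (Fin n ⊕ Fin n) → k,
          MvPolynomial.eval (Sum.elim x y) q₀
            = MvPolynomial.eval (fun v => m x y v.1 v.2) p) := by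
  intro J J' m S₀
  have hJJ : J * J = 1 := J_mul_J hn
  have hJsym : Jᵀ = J := J_symm
  have hJ'T : J'ᵀ = -J' := by
    show (Matrix.fromBlocks 0 J (-J) 0)ᵀ = -(Matrix.fromBlocks 0 J (-J) 0)
    rw [Matrix.fromBlocks_transpose, Matrix.transpose_neg, hJsym, Matrix.fromBlocks_neg]
    congr 1 <;> simp
  have hJ'2 : J' * J' = -1 := by
    show Matrix.fromBlocks 0 J (-J) 0 * Matrix.fromBlocks 0 J (-J) 0 = -1
    rw [Matrix.fromBlocks_multiply]
    rw [← Matrix.fromBlocks_one, Matrix.fromBlocks_neg]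
    congr 1 <;> simp [hJJ]
  -- membership in S₀
  have mem3 : ∀ x y : (Fin n ⊕ Fin n) → k, m x y ∈ S₀ := by
    intro x y
    set S := vecMulVec x y + vecMulVec y x with hSdef
    have hSsym : Sᵀ = S := by
      rw [hSdef, Matrix.transpose_add, vecMulVec_transpose, vecMulVec_transpose, add_comm]
    constructor
    · show (S * J')ᵀ * J' + J' * (S * J') = 0
      rw [Matrix.transpose_mul, hJ'T, hSsym]
      noncomm_ring
    · show (S * J').rank ≤ 2
      refine (Matrix.rank_mul_le_left _ _).trans ?_
      refine (myrank_add_le _ _).trans ?_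
      have := rank_vecMulVec_le (K := k) x y
      have := rank_vecMulVec_le (K := k) y x
      omega
  have mem4 : ∀ A ∈ S₀, ∃ x y : (Fin n ⊕ Fin n) → k, m x y = A := by
    intro A hA
    obtain ⟨x, y, hxy⟩ := surj_aux h2 J' hJ'T hJ'2 A hA.1 hA.2
    exact ⟨x, y, hxy⟩
  refine ⟨?_, ?_, mem3, mem4, ?_, ?_⟩
  · intro t ht x y
    show (vecMulVec (t • x) (t⁻¹ • y) + vecMulVec (t⁻¹ • y) (t • x)) * J' = _
    have e1 : vecMulVec (t • x) (t⁻¹ • y) = vecMulVec x y := by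
      ext a b
      simp only [vecMulVec_apply, Pi.smul_apply, smul_eq_mul]
      field_simp
    have e2 : vecMulVec (t⁻¹ • y) (t • x) = vecMulVec y x := by
      ext a b
      simp only [vecMulVec_apply, Pi.smul_apply, smul_eq_mul]
      field_simp
    rw [e1, e2]
  · intro x y
    show (vecMulVec y x + vecMulVec x y) * J' = (vecMulVec x y + vecMulVec y x) * J'
    rw [add_comm]
  · intro p q hpq A hA
    obtain ⟨x, y, hxy⟩ := mem4 A hA
    rw [← hxy]
    exact hpq x y
  · intro q₀ hinv hswap
    classical
    set μ : ((Fin n ⊕ Fin n) → k) → ((Fin n ⊕ Fin n) → k) →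
        ((Fin n ⊕ Fin n) × (Fin n ⊕ Fin n)) → k :=
      fun x y v => m x y v.1 v.2 with hμdef
    have hμgood : ∀ i j : Fin n ⊕ Fin n, Good μ (fun x y => x i * y j + x j * y i) := by
      intro i j
      cases j with
      | inl j₀ =>
        refine ⟨X (i, Sum.inr (frev n j₀)), fun x y => ?_⟩
        rw [eval_X]
        show x i * y (Sum.inl j₀) + x (Sum.inl j₀) * y i
          = ((vecMulVec x y + vecMulVec y x) * J') i (Sum.inr (frev n j₀))
        rw [show (J' : Matrix (Fin n ⊕ Fin n) (Fin n ⊕ Fin n) k) = Matrix.fromBlocks 0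
          (Matrix.of fun i j : Fin n => if (i:ℕ)+(j:ℕ)+1 = n then (1:k) else 0)
          (-(Matrix.of fun i j : Fin n => if (i:ℕ)+(j:ℕ)+1 = n then (1:k) else 0)) 0 from rfl]
        rw [mul_Jp_inr, frev_frev]
        simp only [Matrix.add_apply, vecMulVec_apply]
        ring
      | inr j₀ =>
        refine ⟨-X (i, Sum.inl (frev n j₀)), fun x y => ?_⟩
        rw [map_neg, eval_X]
        show x i * y (Sum.inr j₀) + x (Sum.inr j₀) * y i
          = -(((vecMulVec x y + vecMulVec y x) * J') i (Sum.inl (frev n j₀)))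
        rw [show (J' : Matrix (Fin n ⊕ Fin n) (Fin n ⊕ Fin n) k) = Matrix.fromBlocks 0
          (Matrix.of fun i j : Fin n => if (i:ℕ)+(j:ℕ)+1 = n then (1:k) else 0)
          (-(Matrix.of fun i j : Fin n => if (i:ℕ)+(j:ℕ)+1 = n then (1:k) else 0)) 0 from rfl]
        rw [mul_Jp_inl, frev_frev, neg_neg]
        simp only [Matrix.add_apply, vecMulVec_apply]
        ring
    have hbal := balanced_of_invariant q₀ hinv
    have hhalf : (2:k)⁻¹ * 2 = 1 := inv_mul_cancel₀ h2
    have hgood : Good μ (fun x y => eval (Sum.elim x y) q₀) := by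
      refine good_ext μ (fun x y => ?_)
        (good_smul μ (2:k)⁻¹ (good_sum μ q₀.support
          (fun a x y => coeff a q₀ *
            ((∏ i, x i ^ a (Sum.inl i)) * (∏ i, y i ^ a (Sum.inr i))
              + (∏ i, x i ^ a (Sum.inr i)) * (∏ i, y i ^ a (Sum.inl i))))
          (fun a ha =>
            good_smul μ (coeff a q₀)
              (good_powT μ hμgood h2 (fun i => a (Sum.inl i)) (fun i => a (Sum.inr i))
                (hbal a ha)))))
      have e1 := eval_elim_expand q₀ x y
      have e2 := eval_elim_expand q₀ y x
      have e3 := hswap x y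
      have splitsum : ∑ a ∈ q₀.support, coeff a q₀ *
            ((∏ i, x i ^ a (Sum.inl i)) * (∏ i, y i ^ a (Sum.inr i))
              + (∏ i, x i ^ a (Sum.inr i)) * (∏ i, y i ^ a (Sum.inl i)))
          = eval (Sum.elim x y) q₀ + eval (Sum.elim x y) q₀ := by
        rw [show (∑ a ∈ q₀.support, coeff a q₀ *
            ((∏ i, x i ^ a (Sum.inl i)) * (∏ i, y i ^ a (Sum.inr i))
              + (∏ i, x i ^ a (Sum.inr i)) * (∏ i, y i ^ a (Sum.inl i))))
          = (∑ a ∈ q₀.support, coeff a q₀ *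
              ((∏ i, x i ^ a (Sum.inl i)) * (∏ i, y i ^ a (Sum.inr i))))
            + (∑ a ∈ q₀.support, coeff a q₀ *
              ((∏ i, y i ^ a (Sum.inl i)) * (∏ i, x i ^ a (Sum.inr i)))) from by
          rw [← Finset.sum_add_distrib]
          apply Finset.sum_congr rfl
          intro a _
          ring]
        rw [← e1, ← e2, e3]
      rw [splitsum]
      set E := eval (Sum.elim x y) q₀
      linear_combination (-E) * hhalf
    obtain ⟨p, hp⟩ := hgood
    exact ⟨p, hp⟩
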